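/- Between any two permutations u, w ∈ Sₙ there is at most one increasing k-chain. That is, if u = w₁ ⋖ₖ w₂ ⋖ₖ ⋯ ⋖ₖ w_d = w and u = w₁' ⋖ₖ ⋯ ⋖ₖ w_e' = w are two saturated chains in the k-Bruhat order whose sequences of smaller swapped values are strictly increasing, then d = e and w_i = w_i' for all i. -/

import Mathlib

/-- Number of inversions of a permutation of `Fin n`. -/
def invCount {n : ℕ} (w : Equiv.Perm (Fin n)) : ℕ :=
  (Finset.univ.filter (fun p : Fin n × Fin n => p.1 < p.2 ∧ w p.2 < w p.1)).card

/-- `w ∈ Sₙ^{k↘}` (1-indexed: `w(k+1) > ⋯ > w(n)`); positions are 0-indexed here. -/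
def DescFrom (n k : ℕ) (w : Equiv.Perm (Fin n)) : Prop :=
  ∀ p q : Fin n, k ≤ (p : ℕ) → p < q → w q < w p

/-- `u ⋖ₖ w` : cover in the `k`-Bruhat order (1-indexed `k`; positions 0-indexed,
so `i ≤ k < j` becomes `↑i < k ≤ ↑j`). -/
def kCover (n k : ℕ) (u w : Equiv.Perm (Fin n)) : Prop :=
  ∃ i j : Fin n, (i : ℕ) < k ∧ k ≤ (j : ℕ) ∧ u = w * Equiv.swap i j ∧
    invCount w = invCount u + 1

/-- An increasing `k`-chain `v 0 ⋖ₖ v 1 ⋖ₖ ⋯ ⋖ₖ v d`, with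
`v m = v (m+1) * swap (a m) (b m)` and strictly increasing smaller swapped values
`v m (a m)`. -/
def IsIncKChain (n k : ℕ) {d : ℕ} (v : Fin (d + 1) → Equiv.Perm (Fin n))
    (a b : Fin d → Fin n) : Prop :=
  (∀ m : Fin d, (a m : ℕ) < k ∧ k ≤ (b m : ℕ) ∧
      v m.castSucc = v m.succ * Equiv.swap (a m) (b m) ∧
      invCount (v m.succ) = invCount (v m.castSucc) + 1) ∧
  ∀ m m' : Fin d, m < m' → v m.castSucc (a m) < v m'.castSucc (a m')

/-- There is an increasing `k`-chain of length `d` (number of covers) from `u` to `w`. -/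
def ExIncKChainLen (n k d : ℕ) (u w : Equiv.Perm (Fin n)) : Prop :=
  ∃ (v : Fin (d + 1) → Equiv.Perm (Fin n)) (a b : Fin d → Fin n),
    IsIncKChain n k v a b ∧ v 0 = u ∧ v (Fin.last d) = w

def invSet {n : ℕ} (w : Equiv.Perm (Fin n)) : Finset (Fin n × Fin n) :=
  Finset.univ.filter (fun p : Fin n × Fin n => p.1 < p.2 ∧ w p.2 < w p.1)

lemma invCount_eq {n : ℕ} (w : Equiv.Perm (Fin n)) : invCount w = (invSet w).card := rfl

lemma mem_invSet {n : ℕ} (w : Equiv.Perm (Fin n)) (p : Fin n × Fin n) :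
    p ∈ invSet w ↔ p.1 < p.2 ∧ w p.2 < w p.1 := by
  simp [invSet]

lemma lemB {n : ℕ} (u : Equiv.Perm (Fin n)) (a b : Fin n) (hab : a < b)
    (hu : u b < u a) : invCount (u * Equiv.swap a b) + 1 ≤ invCount u := by
  classical
  set σ := Equiv.swap a b with hσdef
  set Φ : Fin n × Fin n → Fin n × Fin n :=
    fun p => if σ p.1 < σ p.2 then (σ p.1, σ p.2) else p with hΦdef
  have hσa : σ a = b := Equiv.swap_apply_left a b
  have hσb : σ b = a := Equiv.swap_apply_right a b
  have hmem : ∀ p ∈ invSet (u * σ), Φ p ∈ (invSet u).erase (a, b) := by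
    intro p hp
    rw [mem_invSet] at hp
    obtain ⟨h12, hw⟩ := hp
    have hw' : u (σ p.2) < u (σ p.1) := hw
    rw [Finset.mem_erase]
    by_cases hσlt : σ p.1 < σ p.2
    · rw [hΦdef]; simp only [if_pos hσlt]
      constructor
      · intro he
        have e1 : σ p.1 = a := (Prod.ext_iff.1 he).1
        have e2 : σ p.2 = b := (Prod.ext_iff.1 he).2
        have : p.1 = b := by rw [← hσa, ← e1, Equiv.swap_apply_self]
        have : p.2 = a := by rw [← hσb, ← e2, Equiv.swap_apply_self]
        have hba : (b : Fin n) < a := by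
          rw [← ‹p.1 = b›, ← ‹p.2 = a›]; exact h12
        exact absurd hba (not_lt.2 hab.le)
      · rw [mem_invSet]; exact ⟨hσlt, hw'⟩
    · rw [hΦdef]; simp only [if_neg hσlt]
      have hne12 : σ p.2 < σ p.1 := by
        rcases lt_or_eq_of_le (not_lt.1 hσlt) with h | h
        · exact h
        · exact absurd (σ.injective h) h12.ne'
      by_cases h1a : p.1 = a
      · by_cases h2b : p.2 = b
        · exfalso
          rw [h1a, h2b, hσa, hσb] at hw'
          exact absurd hw' (not_lt.2 hu.le)
        · have h2a : p.2 ≠ a := by rw [h1a] at h12; exact h12.ne'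
          have hσ2 : σ p.2 = p.2 := Equiv.swap_apply_of_ne_of_ne h2a h2b
          rw [h1a, hσa, hσ2] at hw'
          refine ⟨fun he => h2b ((Prod.ext_iff.1 he).2), ?_⟩
          rw [mem_invSet]
          refine ⟨h12, ?_⟩
          rw [h1a]
          exact lt_trans hw' hu
      · by_cases h1b : p.1 = b
        · exfalso
          have h2b : p.2 ≠ b := by rw [h1b] at h12; exact h12.ne'
          have h2a : p.2 ≠ a := by
            rw [h1b] at h12
            exact ne_of_gt (lt_trans hab h12)
          have hσ2 : σ p.2 = p.2 := Equiv.swap_apply_of_ne_of_ne h2a h2b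
          rw [h1b, hσb, hσ2] at hne12
          -- hne12 : p.2 < a, but b < p.2 from h12
          rw [h1b] at h12
          exact absurd (lt_trans hab (lt_trans h12 hne12)) (lt_irrefl a)
        · have hσ1 : σ p.1 = p.1 := Equiv.swap_apply_of_ne_of_ne h1a h1b
          by_cases h2a : p.2 = a
          · exfalso
            rw [h2a, hσa, hσ1] at hne12
            -- b < p.1, p.1 < p.2 = a < b
            rw [h2a] at h12
            exact absurd (lt_trans hab (lt_trans hne12 h12)) (lt_irrefl a)
          · by_cases h2b : p.2 = b
            · have hσ2 : σ p.2 = a := by rw [h2b, hσb]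
              rw [hσ1, hσ2] at hw'
              refine ⟨fun he => h1a ((Prod.ext_iff.1 he).1), ?_⟩
              rw [mem_invSet]
              refine ⟨h12, ?_⟩
              rw [h2b]
              exact lt_trans hu hw'
            · exfalso
              have hσ2 : σ p.2 = p.2 := Equiv.swap_apply_of_ne_of_ne h2a h2b
              rw [hσ1, hσ2] at hne12
              exact absurd (lt_trans h12 hne12) (lt_irrefl p.1)
  have hinj : Set.InjOn Φ (invSet (u * σ)) := by
    intro p hp q hq he
    rw [Finset.mem_coe, mem_invSet] at hp hq
    rw [hΦdef] at he
    simp only at he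
    by_cases hpσ : σ p.1 < σ p.2 <;> by_cases hqσ : σ q.1 < σ q.2
    · rw [if_pos hpσ, if_pos hqσ] at he
      have e1 : σ p.1 = σ q.1 := (Prod.ext_iff.1 he).1
      have e2 : σ p.2 = σ q.2 := (Prod.ext_iff.1 he).2
      exact Prod.ext (σ.injective e1) (σ.injective e2)
    · exfalso
      rw [if_pos hpσ, if_neg hqσ] at he
      have e1 : σ p.1 = q.1 := (Prod.ext_iff.1 he).1
      have e2 : σ p.2 = q.2 := (Prod.ext_iff.1 he).2
      apply hqσ
      rw [← e1, ← e2, Equiv.swap_apply_self, Equiv.swap_apply_self]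
      exact hp.1
    · exfalso
      rw [if_neg hpσ, if_pos hqσ] at he
      have e1 : p.1 = σ q.1 := (Prod.ext_iff.1 he).1
      have e2 : p.2 = σ q.2 := (Prod.ext_iff.1 he).2
      apply hpσ
      rw [e1, e2, Equiv.swap_apply_self, Equiv.swap_apply_self]
      exact hq.1
    · rw [if_neg hpσ, if_neg hqσ] at he; exact he
  have habU : (a, b) ∈ invSet u := by rw [mem_invSet]; exact ⟨hab, hu⟩
  have h1 := Finset.card_le_card_of_injOn Φ hmem hinj
  have h2 := Finset.card_erase_of_mem habU
  have h3 : 0 < (invSet u).card := Finset.card_pos.2 ⟨_, habU⟩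
  rw [invCount_eq, invCount_eq]
  omega


section Chain

variable {n k d : ℕ} {v : Fin (d + 1) → Equiv.Perm (Fin n)} {a b : Fin d → Fin n}

lemma cover_lt {u w : Equiv.Perm (Fin n)} {i j : Fin n} (hij : i < j)
    (huw : u = w * Equiv.swap i j) (hinv : invCount w = invCount u + 1) :
    u i < u j := by
  rcases lt_trichotomy (u i) (u j) with h | h | h
  · exact h
  · exact absurd (u.injective h) hij.ne
  · exfalso
    have hw : w = u * Equiv.swap i j := by
      rw [huw, mul_assoc, Equiv.swap_mul_self, mul_one]
    have h2 := lemB u i j hij h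
    rw [← hw] at h2
    omega

lemma chain_step (h : IsIncKChain n k v a b) (m : Fin d) :
    v m.castSucc (a m) < v m.castSucc (b m) := by
  obtain ⟨hak, hbk, hveq, hinv⟩ := h.1 m
  have hab : a m < b m := by
    rw [Fin.lt_def]; omega
  exact cover_lt hab hveq hinv

lemma chain_vals (h : IsIncKChain n k v a b) (m : Fin d) :
    v m.succ (b m) = v m.castSucc (a m) ∧ v m.succ (a m) = v m.castSucc (b m) := by
  obtain ⟨_, _, hveq, _⟩ := h.1 m
  constructor <;> rw [hveq] <;>
    simp [Equiv.Perm.mul_apply, Equiv.swap_apply_left, Equiv.swap_apply_right]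

lemma step_inv (h : IsIncKChain n k v a b) (m : Fin d) (t : Fin n)
    (h1 : t ≠ v m.castSucc (a m)) (h2 : t ≠ v m.castSucc (b m)) :
    (v m.succ)⁻¹ t = (v m.castSucc)⁻¹ t := by
  obtain ⟨_, _, hveq, _⟩ := h.1 m
  have hvals := chain_vals h m
  have ha : (v m.succ)⁻¹ t ≠ a m := by
    intro hc
    apply h2
    rw [← hvals.2, ← hc, Equiv.Perm.coe_inv, Equiv.apply_symm_apply]
  have hb : (v m.succ)⁻¹ t ≠ b m := by
    intro hc
    apply h1
    rw [← hvals.1, ← hc, Equiv.Perm.coe_inv, Equiv.apply_symm_apply]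
  conv_rhs => rw [hveq]
  rw [mul_inv_rev, Equiv.swap_inv, Equiv.Perm.mul_apply,
    Equiv.swap_apply_of_ne_of_ne ha hb]

lemma frozen (h : IsIncKChain n k v a b) (t : Fin n)
    (ht : ∀ m : Fin d, t < v m.castSucc (a m)) :
    ∀ (j : ℕ) (hj : j < d + 1), (v ⟨j, hj⟩)⁻¹ t = (v 0)⁻¹ t := by
  intro j
  induction j with
  | zero =>
    intro hj
    have : (⟨0, hj⟩ : Fin (d + 1)) = 0 := Fin.ext (by simp)
    rw [this]
  | succ j ih =>
    intro hj
    have hjd : j < d := by omega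
    have hstep := step_inv h ⟨j, hjd⟩ t (ne_of_lt (ht ⟨j, hjd⟩))
      (ne_of_lt (lt_trans (ht ⟨j, hjd⟩) (chain_step h ⟨j, hjd⟩)))
    have e1 : (⟨j, hjd⟩ : Fin d).succ = ⟨j + 1, hj⟩ := rfl
    have e2 : (⟨j, hjd⟩ : Fin d).castSucc = ⟨j, by omega⟩ := rfl
    rw [e1, e2] at hstep
    rw [hstep, ih (by omega)]

lemma inv_mono (h : IsIncKChain n k v a b) :
    ∀ (j : ℕ) (hj : j < d + 1), invCount (v ⟨j, hj⟩) = invCount (v 0) + j := by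
  intro j
  induction j with
  | zero =>
    intro hj
    have : (⟨0, hj⟩ : Fin (d + 1)) = 0 := Fin.ext (by simp)
    rw [this]
    omega
  | succ j ih =>
    intro hj
    have hjd : j < d := by omega
    have hinv2 := (h.1 ⟨j, hjd⟩).2.2.2
    have e1 : (⟨j, hjd⟩ : Fin d).succ = ⟨j + 1, hj⟩ := rfl
    have e2 : (⟨j, hjd⟩ : Fin d).castSucc = ⟨j, by omega⟩ := rfl
    rw [e1, e2] at hinv2
    rw [hinv2, ih (by omega)]
    omega

end Chain

section Tracked

variable {n k d' : ℕ} {v : Fin (d' + 1 + 1) → Equiv.Perm (Fin n)} {a b : Fin (d' + 1) → Fin n}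

lemma tracked (h : IsIncKChain n k v a b) :
    ∀ (j : ℕ) (hj : j < d' + 2), 1 ≤ j → (v ⟨j, hj⟩)⁻¹ (v 0 (a 0)) = b 0 := by
  intro j
  induction j with
  | zero => intro _ h1; omega
  | succ j ih =>
    intro hj _
    rcases Nat.eq_zero_or_pos j with rfl | hjpos
    · have hvals := (chain_vals h 0).1
      have e0 : ((0 : Fin (d' + 1)).castSucc : Fin (d' + 2)) = 0 := by
        exact Fin.ext (by simp)
      have e1 : ((0 : Fin (d' + 1)).succ : Fin (d' + 2)) = ⟨1, hj⟩ := by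
        exact Fin.ext (by simp)
      rw [e0, e1] at hvals
      rw [← hvals, Equiv.Perm.coe_inv, Equiv.symm_apply_apply]
    · have hjd : j < d' + 1 := by omega
      have h0m : (0 : Fin (d' + 1)) < ⟨j, hjd⟩ := by
        rw [Fin.lt_def]; simpa using hjpos
      have hincr := h.2 0 ⟨j, hjd⟩ h0m
      have e0 : ((0 : Fin (d' + 1)).castSucc : Fin (d' + 2)) = 0 := Fin.ext (by simp)
      rw [e0] at hincr
      have hα : v 0 (a 0) ≠ v (⟨j, hjd⟩ : Fin (d' + 1)).castSucc (a ⟨j, hjd⟩) :=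
        ne_of_lt hincr
      have hβ : v 0 (a 0) ≠ v (⟨j, hjd⟩ : Fin (d' + 1)).castSucc (b ⟨j, hjd⟩) :=
        ne_of_lt (lt_trans hincr (chain_step h ⟨j, hjd⟩))
      have hstep := step_inv h ⟨j, hjd⟩ _ hα hβ
      have e1 : (⟨j, hjd⟩ : Fin (d' + 1)).succ = ⟨j + 1, hj⟩ := rfl
      have e2 : (⟨j, hjd⟩ : Fin (d' + 1)).castSucc = ⟨j, by omega⟩ := rfl
      rw [e1, e2] at hstep
      rw [hstep]
      exact ih (by omega) hjpos

end Tracked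


section FirstStep

lemma first_min {n k e' : ℕ} {v' : Fin (e' + 1 + 1) → Equiv.Perm (Fin n)}
    {a' b' : Fin (e' + 1) → Fin n} (h2 : IsIncKChain n k v' a' b') {t : Fin n}
    (hlt : t < v' 0 (a' 0)) :
    ∀ m : Fin (e' + 1), t < v' m.castSucc (a' m) := by
  intro m
  have e0 : ((0 : Fin (e' + 1)).castSucc : Fin (e' + 2)) = 0 := Fin.ext (by simp)
  rcases eq_or_ne m 0 with rfl | hm
  · rw [e0]; exact hlt
  · have h0m : (0 : Fin (e' + 1)) < m := Fin.pos_of_ne_zero hm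
    have := h2.2 0 m h0m
    rw [e0] at this
    exact lt_trans hlt this

end FirstStep

lemma key (n k : ℕ) : ∀ (d e : ℕ)
    (v : Fin (d + 1) → Equiv.Perm (Fin n)) (a b : Fin d → Fin n)
    (v' : Fin (e + 1) → Equiv.Perm (Fin n)) (a' b' : Fin e → Fin n),
    IsIncKChain n k v a b → IsIncKChain n k v' a' b' →
    v 0 = v' 0 → v (Fin.last d) = v' (Fin.last e) →
    d = e ∧ ∀ (i : ℕ) (hi : i < d + 1) (hi' : i < e + 1), v ⟨i, hi⟩ = v' ⟨i, hi'⟩ := by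
  intro d
  induction d with
  | zero =>
    intro e v a b v' a' b' h1 h2 hstart hend
    have hm := inv_mono h2 e (by omega)
    have hle : v' ⟨e, by omega⟩ = v' 0 := by
      have e1 : (⟨e, by omega⟩ : Fin (e + 1)) = Fin.last e := rfl
      have e2 : (Fin.last 0 : Fin 1) = 0 := rfl
      rw [e1, ← hend, e2, hstart]
    rw [hle] at hm
    have he0 : e = 0 := by omega
    subst he0
    refine ⟨rfl, ?_⟩
    intro i hi hi'
    have hi0 : i = 0 := by omega
    subst hi0
    calc v ⟨0, hi⟩ = v 0 := congrArg v (Fin.ext (by simp))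
      _ = v' 0 := hstart
      _ = v' ⟨0, hi'⟩ := (congrArg v' (Fin.ext (by simp))).symm
  | succ d' ih =>
    intro e v a b v' a' b' h1 h2 hstart hend
    cases e with
    | zero =>
      exfalso
      have hm := inv_mono h1 (d' + 1) (by omega)
      have hle : v ⟨d' + 1, by omega⟩ = v 0 := by
        have e1 : (⟨d' + 1, by omega⟩ : Fin (d' + 2)) = Fin.last (d' + 1) := rfl
        have e2 : (Fin.last 0 : Fin 1) = 0 := rfl
        rw [e1, hend, e2, ← hstart]
      rw [hle] at hm
      omega
    | succ e' =>
      set t := v 0 (a 0) with htdef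
      set t' := v' 0 (a' 0) with ht'def
      obtain ⟨hak, hbk, hveq0, _⟩ := h1.1 0
      obtain ⟨hak', hbk', hveq0', _⟩ := h2.1 0
      -- inverse facts
      have hv0inv : (v 0)⁻¹ t = a 0 := Equiv.symm_apply_apply _ _
      have hv0inv' : (v' 0)⁻¹ t' = a' 0 := Equiv.symm_apply_apply _ _
      have htr1 : (v ⟨d' + 1, by omega⟩)⁻¹ t = b 0 := tracked h1 (d' + 1) (by omega) (by omega)
      have htr2 : (v' ⟨e' + 1, by omega⟩)⁻¹ t' = b' 0 := tracked h2 (e' + 1) (by omega) (by omega)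
      have hlast1 : v ⟨d' + 1, by omega⟩ = v (Fin.last (d' + 1)) := rfl
      have hlast2 : v' ⟨e' + 1, by omega⟩ = v' (Fin.last (e' + 1)) := rfl
      have htt' : t = t' := by
        rcases lt_trichotomy t t' with hlt | heq | hgt
        · exfalso
          have hfr := frozen h2 t (first_min h2 hlt) (e' + 1) (by omega)
          -- (v' last)⁻¹ t = (v' 0)⁻¹ t
          have hb0 : (v ⟨d' + 1, by omega⟩)⁻¹ t = b 0 := htr1
          rw [hlast2, ← hend, ← hlast1, hb0, ← hstart, htdef, Equiv.Perm.coe_inv, Equiv.symm_apply_apply] at hfr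
          -- hfr : b 0 = a 0
          rw [hfr] at hbk
          omega
        · exact heq
        · exfalso
          have hfr := frozen h1 t' (first_min h1 hgt) (d' + 1) (by omega)
          rw [hlast1, hend, ← hlast2, htr2, hstart, ht'def, Equiv.Perm.coe_inv, Equiv.symm_apply_apply] at hfr
          rw [hfr] at hbk'
          omega
      have ha0 : a 0 = a' 0 := by
        rw [← hv0inv, ← hv0inv', ← htt', hstart]
      have hb0 : b 0 = b' 0 := by
        rw [← htr1, ← htr2, hlast1, hlast2, hend, htt']
      -- v 1 = v' 1
      have e0c : ((0 : Fin (d' + 1)).castSucc : Fin (d' + 2)) = 0 := Fin.ext (by simp)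
      have e0c' : ((0 : Fin (e' + 1)).castSucc : Fin (e' + 2)) = 0 := Fin.ext (by simp)
      have hv1 : v (0 : Fin (d' + 1)).succ = v' (0 : Fin (e' + 1)).succ := by
        have q1 : v (0 : Fin (d' + 1)).succ
            = v (0 : Fin (d' + 1)).castSucc * Equiv.swap (a 0) (b 0) := by
          rw [hveq0, mul_assoc, Equiv.swap_mul_self, mul_one]
        have q2 : v' (0 : Fin (e' + 1)).succ
            = v' (0 : Fin (e' + 1)).castSucc * Equiv.swap (a' 0) (b' 0) := by
          rw [hveq0', mul_assoc, Equiv.swap_mul_self, mul_one]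
        rw [q1, q2, e0c, e0c', hstart, ha0, hb0]
      -- shifted chains
      have hw : IsIncKChain n k (fun i : Fin (d' + 1) => v i.succ)
          (fun m : Fin d' => a m.succ) (fun m : Fin d' => b m.succ) := by
        constructor
        · intro m
          obtain ⟨x1, x2, x3, x4⟩ := h1.1 m.succ
          refine ⟨x1, x2, ?_, ?_⟩
          · show v (m.castSucc).succ = v m.succ.succ * _
            rw [Fin.succ_castSucc]
            exact x3
          · show invCount (v m.succ.succ) = invCount (v (m.castSucc).succ) + 1
            rw [Fin.succ_castSucc]
            exact x4
        · intro m m' hmm'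
          have := h1.2 m.succ m'.succ (by rwa [Fin.succ_lt_succ_iff])
          show v (m.castSucc).succ (a m.succ) < v (m'.castSucc).succ (a m'.succ)
          rw [Fin.succ_castSucc, Fin.succ_castSucc]
          exact this
      have hw' : IsIncKChain n k (fun i : Fin (e' + 1) => v' i.succ)
          (fun m : Fin e' => a' m.succ) (fun m : Fin e' => b' m.succ) := by
        constructor
        · intro m
          obtain ⟨x1, x2, x3, x4⟩ := h2.1 m.succ
          refine ⟨x1, x2, ?_, ?_⟩
          · show v' (m.castSucc).succ = v' m.succ.succ * _
            rw [Fin.succ_castSucc]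
            exact x3
          · show invCount (v' m.succ.succ) = invCount (v' (m.castSucc).succ) + 1
            rw [Fin.succ_castSucc]
            exact x4
        · intro m m' hmm'
          have := h2.2 m.succ m'.succ (by rwa [Fin.succ_lt_succ_iff])
          show v' (m.castSucc).succ (a' m.succ) < v' (m'.castSucc).succ (a' m'.succ)
          rw [Fin.succ_castSucc, Fin.succ_castSucc]
          exact this
      have hwend : v (Fin.last d').succ = v' (Fin.last e').succ := by
        rw [Fin.succ_last, Fin.succ_last]
        exact hend
      obtain ⟨hde, hpt⟩ := ih e' (fun i : Fin (d' + 1) => v i.succ)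
        (fun m : Fin d' => a m.succ) (fun m : Fin d' => b m.succ)
        (fun i : Fin (e' + 1) => v' i.succ)
        (fun m : Fin e' => a' m.succ) (fun m : Fin e' => b' m.succ)
        hw hw' hv1 hwend
      refine ⟨by omega, ?_⟩
      intro i hi hi'
      cases i with
      | zero =>
        calc v ⟨0, hi⟩ = v 0 := congrArg v (Fin.ext (by simp))
          _ = v' 0 := hstart
          _ = v' ⟨0, hi'⟩ := (congrArg v' (Fin.ext (by simp))).symm
      | succ i' =>
        exact hpt i' (by omega) (by omega)


theorem stmt3 (n k d e : ℕ)
    (v : Fin (d + 1) → Equiv.Perm (Fin n)) (a b : Fin d → Fin n)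
    (v' : Fin (e + 1) → Equiv.Perm (Fin n)) (a' b' : Fin e → Fin n)
    (h1 : IsIncKChain n k v a b) (h2 : IsIncKChain n k v' a' b')
    (hstart : v 0 = v' 0) (hend : v (Fin.last d) = v' (Fin.last e)) :
    d = e ∧ ∀ (i : ℕ) (hi : i < d + 1) (hi' : i < e + 1), v ⟨i, hi⟩ = v' ⟨i, hi'⟩ := by
  exact key n k d e v a b v' a' b' h1 h2 hstart hend
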